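/- For the planar system Σ' = -Σ(1 - 2A - C₂(Σ² - A²)), A' = A(1 + 2Σ + C₂(Σ² - A²)) (the case v = -1), the point (Σ,A) = (-1/2, 1/2) is an equilibrium whose Jacobian has eigenvalues ±√(C₂ - 1); hence it is a hyperbolic saddle for C₂ > 1 and non-hyperbolic for C₂ ≤ 1. -/

import Mathlib

noncomputable section

/-- Σ-component of the v = -1 extreme-tilt system. -/
def fET (C₂ S A : ℝ) : ℝ := -S * (1 - 2 * A - C₂ * (S ^ 2 - A ^ 2))

/-- A-component of the v = -1 extreme-tilt system. -/
def gET (C₂ S A : ℝ) : ℝ := A * (1 + 2 * S + C₂ * (S ^ 2 - A ^ 2))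

/-- Jacobian matrix of the planar system at `(S, A)`. -/
def JacET (C₂ S A : ℝ) : Matrix (Fin 2) (Fin 2) ℝ :=
  !![deriv (fun s => fET C₂ s A) S, deriv (fun a => fET C₂ S a) A;
     deriv (fun s => gET C₂ s A) S, deriv (fun a => gET C₂ S a) A]

lemma cube_deriv (c0 c1 c2 c3 x : ℝ) :
    HasDerivAt (fun t : ℝ => c0 + c1*t + c2*t^2 + c3*t^3)
      (c1 + 2*c2*x + 3*c3*x^2) x := by
  have h2 : HasDerivAt (fun t : ℝ => t ^ 2) (2 * x) x := by simpa using hasDerivAt_pow 2 x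
  have h3 : HasDerivAt (fun t : ℝ => t ^ 3) (3 * x ^ 2) x := by simpa using hasDerivAt_pow 3 x
  have h := (((hasDerivAt_const x c0).add ((hasDerivAt_id x).const_mul c1)).add
      (h2.const_mul c2)).add (h3.const_mul c3)
  refine h.congr_deriv ?_
  ring

lemma jac_eq (C₂ : ℝ) : JacET C₂ (-(1/2)) (1/2) = !![C₂/2, C₂/2 - 1; 1 - C₂/2, -C₂/2] := by
  have e00 : (fun s => fET C₂ s (1/2)) = (fun s : ℝ => 0 + (-C₂/4)*s + 0*s^2 + C₂*s^3) := by
    funext s; simp only [fET]; ring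
  have e01 : (fun a => fET C₂ (-(1/2)) a)
      = (fun a : ℝ => (1/2 - C₂/8) + (-1)*a + (C₂/2)*a^2 + 0*a^3) := by
    funext a; simp only [fET]; ring
  have e10 : (fun s => gET C₂ s (1/2))
      = (fun s : ℝ => (1/2 - C₂/8) + 1*s + (C₂/2)*s^2 + 0*s^3) := by
    funext s; simp only [gET]; ring
  have e11 : (fun a => gET C₂ (-(1/2)) a) = (fun a : ℝ => 0 + (C₂/4)*a + 0*a^2 + (-C₂)*a^3) := by
    funext a; simp only [gET]; ring
  unfold JacET
  rw [e00, e01, e10, e11, (cube_deriv _ _ _ _ _).deriv, (cube_deriv _ _ _ _ _).deriv,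
    (cube_deriv _ _ _ _ _).deriv, (cube_deriv _ _ _ _ _).deriv]
  congr 1 <;> ring_nf

lemma eig_iff {K : Type*} [Field K] [CharZero K] (c μ : K) :
    Module.End.HasEigenvalue
      (Matrix.toLin' (!![c/2, c/2 - 1; 1 - c/2, -c/2] : Matrix (Fin 2) (Fin 2) K)) μ ↔
    μ ^ 2 = c - 1 := by
  have mulvec : ∀ v : Fin 2 → K,
      (Matrix.toLin' (!![c/2, c/2 - 1; 1 - c/2, -c/2] : Matrix (Fin 2) (Fin 2) K)) v
        = ![c/2 * v 0 + (c/2 - 1) * v 1, (1 - c/2) * v 0 + (-c/2) * v 1] := by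
    intro v
    rw [Matrix.toLin'_apply]
    funext i
    fin_cases i <;>
      simp [Matrix.mulVec, dotProduct, Fin.sum_univ_two]
  have eigOf : ∀ (x y : K), (x ≠ 0 ∨ y ≠ 0) →
      c/2 * x + (c/2 - 1) * y = μ * x →
      (1 - c/2) * x + (-c/2) * y = μ * y →
      Module.End.HasEigenvalue
        (Matrix.toLin' (!![c/2, c/2 - 1; 1 - c/2, -c/2] : Matrix (Fin 2) (Fin 2) K)) μ := by
    intro x y hne h0 h1
    apply Module.End.hasEigenvalue_of_hasEigenvector (x := ![x, y])
    refine ⟨Module.End.mem_eigenspace_iff.mpr ?_, ?_⟩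
    · rw [mulvec]
      funext i
      fin_cases i <;> simpa using by assumption
    · intro h
      rcases hne with h' | h' <;> [exact h' (congrFun h 0); exact h' (congrFun h 1)]
  constructor
  · intro h
    obtain ⟨v, hv, hv0⟩ := h.exists_hasEigenvector
    rw [Module.End.mem_eigenspace_iff, mulvec] at hv
    have E0 : c/2 * v 0 + (c/2 - 1) * v 1 = μ * v 0 := by simpa using congrFun hv 0
    have E1 : (1 - c/2) * v 0 + (-c/2) * v 1 = μ * v 1 := by simpa using congrFun hv 1
    by_cases hx : v 0 = 0
    · have hy : v 1 ≠ 0 := fun hy => hv0 (funext fun i => by fin_cases i <;> simp [hx, hy])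
      have hc : c/2 - 1 = 0 := by
        have : (c/2 - 1) * v 1 = 0 := by rw [hx] at E0; simpa [hx] using E0
        exact (mul_eq_zero.mp this).resolve_right hy
      have hμ : μ = -(c/2) := by
        have : (-c/2) * v 1 = μ * v 1 := by rw [hx] at E1; simpa using E1
        have := mul_right_cancel₀ hy this
        linear_combination -this
      rw [hμ]
      linear_combination (c/2 - 1) * hc
    · by_cases hy : v 1 = 0
      · have hc : 1 - c/2 = 0 := by
          have : (1 - c/2) * v 0 = 0 := by rw [hy] at E1; simpa [hy] using E1
          exact (mul_eq_zero.mp this).resolve_right hx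
        have hμ : μ = c/2 := by
          have : c/2 * v 0 = μ * v 0 := by rw [hy] at E0; simpa using E0
          exact (mul_right_cancel₀ hx this).symm
        rw [hμ]
        linear_combination (1 - c/2) * hc
      · have key : ((c - 1) - μ^2) * (v 0 * v 1) = 0 := by
          linear_combination ((μ + c/2) * v 1) * E0 + ((c/2 - 1) * v 1) * E1
        have := (mul_eq_zero.mp key).resolve_right (mul_ne_zero hx hy)
        linear_combination -this
  · intro h
    by_cases hc : c = 2
    · subst hc
      have : (μ - 1) * (μ + 1) = 0 := by linear_combination h
      rcases mul_eq_zero.mp this with h' | h'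
      · have hμ : μ = 1 := by linear_combination h'
        exact eigOf 1 0 (Or.inl one_ne_zero) (by rw [hμ]; ring) (by rw [hμ]; ring)
      · have hμ : μ = -1 := by linear_combination h'
        exact eigOf 0 1 (Or.inr one_ne_zero) (by rw [hμ]; ring) (by rw [hμ]; ring)
    · refine eigOf (μ + c/2) (1 - c/2) (Or.inr ?_) (by linear_combination -h) (by ring)
      intro h'
      exact hc (by linear_combination -2 * h')

lemma map_eq (C₂ : ℝ) :
    ((!![C₂/2, C₂/2 - 1; 1 - C₂/2, -C₂/2] : Matrix (Fin 2) (Fin 2) ℝ).map (algebraMap ℝ ℂ))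
      = !![(C₂:ℂ)/2, (C₂:ℂ)/2 - 1; 1 - (C₂:ℂ)/2, -(C₂:ℂ)/2] := by
  ext i j
  fin_cases i <;> fin_cases j <;> simp [Matrix.map_apply] <;> push_cast <;> ring

/-- The point `(Σ, A) = (-1/2, 1/2)` is an equilibrium of the v = -1 extreme-tilt
system whose Jacobian has eigenvalues `±√(C₂ - 1)` (i.e. its eigenvalues over ℂ are
exactly the square roots of `C₂ - 1`); hence it is a hyperbolic saddle for `C₂ > 1`
and non-hyperbolic for `C₂ ≤ 1`. -/
theorem P7_saddle_or_nonhyperbolic (C₂ : ℝ) :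
    fET C₂ (-(1/2)) (1/2) = 0 ∧ gET C₂ (-(1/2)) (1/2) = 0 ∧
    (∀ μ : ℂ,
      Module.End.HasEigenvalue
        (Matrix.toLin' ((JacET C₂ (-(1/2)) (1/2)).map (algebraMap ℝ ℂ))) μ ↔
      μ ^ 2 = (C₂ : ℂ) - 1) ∧
    (1 < C₂ →
      Module.End.HasEigenvalue (Matrix.toLin' (JacET C₂ (-(1/2)) (1/2)))
        (Real.sqrt (C₂ - 1)) ∧
      Module.End.HasEigenvalue (Matrix.toLin' (JacET C₂ (-(1/2)) (1/2)))
        (-Real.sqrt (C₂ - 1)) ∧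
      0 < Real.sqrt (C₂ - 1)) ∧
    (C₂ ≤ 1 → ∃ μ : ℂ,
      Module.End.HasEigenvalue
        (Matrix.toLin' ((JacET C₂ (-(1/2)) (1/2)).map (algebraMap ℝ ℂ))) μ ∧
      μ.re = 0) := by
  have hJ := jac_eq C₂
  have hC : ∀ μ : ℂ,
      Module.End.HasEigenvalue
        (Matrix.toLin' ((JacET C₂ (-(1/2)) (1/2)).map (algebraMap ℝ ℂ))) μ ↔
      μ ^ 2 = (C₂ : ℂ) - 1 := by
    intro μ
    rw [hJ, map_eq]
    exact eig_iff (C₂ : ℂ) μ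
  refine ⟨by simp [fET], by simp [gET], hC, ?_, ?_⟩
  · intro h1
    have hr : Real.sqrt (C₂ - 1) ^ 2 = C₂ - 1 := Real.sq_sqrt (by linarith)
    rw [hJ]
    exact ⟨(eig_iff C₂ _).mpr hr, (eig_iff C₂ _).mpr (by rw [neg_pow]; simpa using hr),
      Real.sqrt_pos.mpr (by linarith)⟩
  · intro h1
    refine ⟨(Real.sqrt (1 - C₂) : ℝ) * Complex.I, (hC _).mpr ?_, by simp⟩
    have hr : Real.sqrt (1 - C₂) ^ 2 = 1 - C₂ := Real.sq_sqrt (by linarith)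
    rw [mul_pow, Complex.I_sq, ← Complex.ofReal_pow, hr]
    push_cast
    ring
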